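/- arXiv:2512.20180 — 9 statements merged into one kernel-verified Lean document; each statement's English description precedes it below -/
import Mathlib

section
/- If F is a disjointness-compliable set family, then for any A ∈ F and any inclusion-minimal member C of F (an F-core), either C ⊆ A or C ∩ A = ∅. -/
theorem stmt_1 {V : Type*} (F : Set (Set V))
    (hdc : ∀ A ∈ F, ∀ A' ⊆ A, A' ∈ F ∨ A \ A' ∈ F)
    (A : Set V) (hA : A ∈ F)
    (C : Set V) (hC : C ∈ F) (hCmin : ∀ B ∈ F, B ⊆ C → B = C) :
    C ⊆ A ∨ C ∩ A = ∅ := by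
  rcases hdc C hC (C ∩ A) Set.inter_subset_left with h | h
  · left
    have := hCmin _ h Set.inter_subset_left
    rw [← this]
    exact Set.inter_subset_right
  · right
    have := hCmin _ h Set.diff_subset
    ext x
    simp only [Set.mem_inter_iff, Set.mem_empty_iff_false, iff_false]
    rintro ⟨hxC, hxA⟩
    rw [← this] at hxC
    exact hxC.2 ⟨hxC.1, hxA⟩
end

section
/- If F is a disjointness-compliable set family, then the inclusion-minimal members of F (the F-cores) are pairwise disjoint. -/
theorem stmt_2 {V : Type*} (F : Set (Set V))
    (hdc : ∀ A ∈ F, ∀ A' ⊆ A, A' ∈ F ∨ A \ A' ∈ F)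
    (C₁ : Set V) (hC₁ : C₁ ∈ F) (hC₁min : ∀ B ∈ F, B ⊆ C₁ → B = C₁)
    (C₂ : Set V) (hC₂ : C₂ ∈ F) (hC₂min : ∀ B ∈ F, B ⊆ C₂ → B = C₂)
    (hne : C₁ ≠ C₂) :
    Disjoint C₁ C₂ := by
  rcases hdc C₁ hC₁ (C₁ ∩ C₂) Set.inter_subset_left with h | h
  · exact absurd ((hC₁min _ h Set.inter_subset_left).symm.trans
      (hC₂min _ h Set.inter_subset_right)) hne
  · rw [Set.diff_self_inter] at h
    rw [← hC₁min _ h Set.diff_subset]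
    exact Set.disjoint_sdiff_left
end

section
/- In a graph G = (V, E), any inclusion-minimal edge set J that covers a set family F (i.e., for every A ∈ F some edge of J has exactly one endpoint in A) is a forest (contains no cycle). -/
/-- An edge set `K` covers a set family `F`: every `A ∈ F` is covered by some
edge of `K` having exactly one endpoint in `A`. -/
def EdgeCovers {V : Type*} (K : Set (Sym2 V)) (F : Set (Set V)) : Prop :=
  ∀ A ∈ F, ∃ e ∈ K, ∃ u v, e = s(u, v) ∧ u ∈ A ∧ v ∉ A

/-!
If an edge `uv` of `J` lay on a cycle, the rest of the cycle would be a `u`–`v` path in `J \ {uv}`.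
Any set `A` separating `u` from `v` is then crossed by some edge of that path, so `J \ {uv}` still
covers every set that `J` covers, contradicting minimality. Hence every edge of `J` is a bridge.
-/

open SimpleGraph

section

variable {V : Type*}

lemma exists_crossing_of_reachable {K : Set (Sym2 V)} {A : Set V} {x y : V}
    (hxy : (fromEdgeSet K).Reachable x y) (hx : x ∈ A) (hy : y ∉ A) :
    ∃ e ∈ K, ∃ u v, e = s(u, v) ∧ u ∈ A ∧ v ∉ A := by
  obtain ⟨p⟩ := hxy
  obtain ⟨d, -, hdA, hdA'⟩ := p.exists_boundary_dart A hx hy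
  exact ⟨_, (fromEdgeSet_adj K).1 d.adj |>.1, d.fst, d.snd, rfl, hdA, hdA'⟩

lemma EdgeCovers.sdiff_singleton_of_reachable {J : Set (Sym2 V)} {F : Set (Set V)} {u v : V}
    (hcov : EdgeCovers J F) (huv : (fromEdgeSet (J \ {s(u, v)})).Reachable u v) :
    EdgeCovers (J \ {s(u, v)}) F := by
  intro A hA
  obtain ⟨e, heJ, x, y, rfl, hx, hy⟩ := hcov A hA
  by_cases he : s(x, y) = s(u, v)
  · rcases Sym2.eq_iff.1 he with ⟨rfl, rfl⟩ | ⟨rfl, rfl⟩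
    · exact exists_crossing_of_reachable huv hx hy
    · exact exists_crossing_of_reachable huv.symm hx hy
  · exact ⟨_, ⟨heJ, he⟩, x, y, rfl, hx, hy⟩

end

theorem stmt_6 {V : Type*} (F : Set (Set V)) (J : Set (Sym2 V))
    (hcov : EdgeCovers J F)
    (hmin : ∀ K ⊂ J, ¬ EdgeCovers K F) :
    (SimpleGraph.fromEdgeSet J).IsAcyclic := by
  refine isAcyclic_iff_forall_adj_isBridge.2 fun u v huv hreach => ?_
  rw [deleteEdges_fromEdgeSet] at hreach
  exact hmin _ (Set.sdiff_singleton_ssubset.2 ((fromEdgeSet_adj J).1 huv).1)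
    (hcov.sdiff_singleton_of_reachable hreach)
end

section
/- Let F be a proper (disjointness-compliable and symmetric) family on V with all F-cores being singletons forming terminal set T, and assume no subset of V \ T belongs to F. If A ∈ F and B ⊆ V \ T, then A ∪ B ∈ F. -/
theorem stmt_8 {V : Type*} (F : Set (Set V)) (T : Set V)
    (hdc : ∀ A ∈ F, ∀ A' ⊆ A, A' ∈ F ∨ A \ A' ∈ F)
    (hsym : ∀ A ∈ F, (Set.univ \ A) ∈ F)
    (hTcore : ∀ t ∈ T, {t} ∈ F)
    (hcore : ∀ A ∈ F, (∀ B ∈ F, B ⊆ A → B = A) → ∃ t ∈ T, A = {t})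
    (hnoT : ∀ A : Set V, A ⊆ Set.univ \ T → A ∉ F)
    (A : Set V) (hA : A ∈ F) (B : Set V) (hB : B ⊆ Set.univ \ T) :
    A ∪ B ∈ F := by
  have hAc : (Set.univ \ A) ∈ F := hsym A hA
  have hsub : Set.univ \ (A ∪ B) ⊆ Set.univ \ A := by
    intro x hx; exact ⟨hx.1, fun h => hx.2 (Or.inl h)⟩
  rcases hdc _ hAc _ hsub with h | h
  · have := hsym _ h
    simpa using this
  · exfalso
    apply hnoT ((Set.univ \ A) \ (Set.univ \ (A ∪ B))) _ h
    intro x hx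
    have hxB : x ∈ B := by
      rcases hx with ⟨⟨_, hxA⟩, hx2⟩
      have : x ∈ A ∪ B := by
        by_contra hc
        exact hx2 ⟨trivial, hc⟩
      rcases this with h' | h'
      · exact absurd h' hxA
      · exact h'
    exact hB hxB
end

section
/- Let J be an inclusion-minimal cover of a proper (disjointness-compliable and symmetric) family F on V whose cores are singletons (terminals T), and let H be a nontrivial connected component of (V, J). Then every leaf of the tree H is a terminal; consequently H contains at least two terminals. -/
/-- Key lemma: if every `J`-edge crossing `A` has its inside endpoint reachable
from `u`, then `A` contains a terminal reachable from `u`. -/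
lemma reach_term {V : Type*} [Fintype V] (F : Set (Set V)) (T : Set V)
    (J : Set (Sym2 V))
    (hdc : ∀ A ∈ F, ∀ A' ⊆ A, A' ∈ F ∨ A \ A' ∈ F)
    (hcore : ∀ A ∈ F, (∀ B ∈ F, B ⊆ A → B = A) → ∃ t ∈ T, A = {t})
    (hcov : EdgeCovers J F)
    (hempty : (∅ : Set V) ∉ F) :
    ∀ n (A : Set V), A.ncard = n → A ∈ F → ∀ u : V,
      (∀ e ∈ J, ∀ x y : V, e = s(x, y) → x ∈ A → y ∉ A →
        (SimpleGraph.fromEdgeSet J).Reachable u x) →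
      ∃ t ∈ T, t ∈ A ∧ (SimpleGraph.fromEdgeSet J).Reachable u t := by
  intro n
  induction n using Nat.strong_induction_on with
  | _ n ih =>
    intro A hAn hA u hcross
    obtain ⟨e, he, x, y, hexy, hxA, hyA⟩ := hcov A hA
    have hux : (SimpleGraph.fromEdgeSet J).Reachable u x := hcross e he x y hexy hxA hyA
    rcases hdc A hA {x} (Set.singleton_subset_iff.mpr hxA) with hx | hAx
    · -- {x} ∈ F, so x is a terminal
      obtain ⟨t, ht, hte⟩ := hcore {x} hx (by
        intro B hB hBsub
        rcases Set.subset_singleton_iff_eq.mp hBsub with h | h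
        · exact absurd (h ▸ hB) hempty
        · exact h)
      have hxt : x = t := Set.singleton_eq_singleton_iff.mp hte
      exact ⟨x, by rw [hxt]; exact ht, hxA, hux⟩
    · -- A \ {x} ∈ F
      have hlt : (A \ {x}).ncard < n := by
        rw [← hAn]
        exact Set.ncard_diff_singleton_lt_of_mem hxA (Set.toFinite A)
      refine (ih _ hlt (A \ {x}) rfl hAx u ?_).imp fun t ⟨ht, htA, hr⟩ => ⟨ht, htA.1, hr⟩
      intro e' he' z w hzw hz hw
      by_cases hwA : w ∈ A
      · -- w = x, edge from z to x
        have hwx : w = x := by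
          by_contra h
          exact hw ⟨hwA, h⟩
        have hadj : (SimpleGraph.fromEdgeSet J).Adj x z := by
          rw [SimpleGraph.fromEdgeSet_adj]
          constructor
          · rw [Sym2.eq_swap]; exact hwx ▸ hzw ▸ he'
          · intro h; exact hz.2 (Set.mem_singleton_iff.mpr h.symm)
        exact hux.trans hadj.reachable
      · exact hcross e' he' z w hzw hz.1 hwA

theorem stmt_10 {V : Type*} [Fintype V] (F : Set (Set V)) (T : Set V)
    (J : Set (Sym2 V))
    (hdc : ∀ A ∈ F, ∀ A' ⊆ A, A' ∈ F ∨ A \ A' ∈ F)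
    (hsym : ∀ A ∈ F, (Set.univ \ A) ∈ F)
    (hTcore : ∀ t ∈ T, {t} ∈ F)
    (hcore : ∀ A ∈ F, (∀ B ∈ F, B ⊆ A → B = A) → ∃ t ∈ T, A = {t})
    (hcov : EdgeCovers J F)
    (hmin : ∀ K ⊂ J, ¬ EdgeCovers K F) :
    (∀ v : V, ((SimpleGraph.fromEdgeSet J).neighborSet v).ncard = 1 → v ∈ T) ∧
    (∀ u w : V, (SimpleGraph.fromEdgeSet J).Adj u w →
      ∃ t₁ ∈ T, ∃ t₂ ∈ T, t₁ ≠ t₂ ∧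
        (SimpleGraph.fromEdgeSet J).Reachable u t₁ ∧
        (SimpleGraph.fromEdgeSet J).Reachable u t₂) := by
  set G := SimpleGraph.fromEdgeSet J with hG
  have hempty : (∅ : Set V) ∉ F := by
    intro h
    obtain ⟨e, _, x, y, _, hx, _⟩ := hcov ∅ h
    exact hx
  have hsing : ∀ v : V, {v} ∈ F → v ∈ T := by
    intro v hv
    obtain ⟨t, ht, hte⟩ := hcore {v} hv (by
      intro B hB hBsub
      rcases Set.subset_singleton_iff_eq.mp hBsub with h | h
      · exact absurd (h ▸ hB) hempty
      · exact h)
    have : v = t := Set.singleton_eq_singleton_iff.mp hte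
    exact this ▸ ht
  -- for an edge e ∈ J, get A ∈ F covered only by e
  have honly : ∀ e ∈ J, ∃ A ∈ F,
      ∀ e' ∈ J, ∀ x y : V, e' = s(x, y) → x ∈ A → y ∉ A → e' = e := by
    intro e he
    have hss : J \ {e} ⊂ J := by
      constructor
      · exact Set.diff_subset
      · intro h
        exact (h he).2 rfl
    have := hmin _ hss
    rw [EdgeCovers] at this
    push_neg at this
    obtain ⟨A, hA, hAn⟩ := this
    refine ⟨A, hA, fun e' he' x y hxy hx hy => ?_⟩
    by_contra hne
    exact hy (hAn e' ⟨he', hne⟩ x y hxy hx)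
  constructor
  · -- leaves are terminals
    intro v hv
    obtain ⟨w, hw⟩ := Set.ncard_eq_one.mp hv
    have hadj : G.Adj v w := by
      have : w ∈ G.neighborSet v := hw ▸ Set.mem_singleton w
      exact this
    have hnbr : ∀ x, G.Adj v x → x = w := by
      intro x hx
      have : x ∈ G.neighborSet v := hx
      rw [hw] at this
      exact this
    have he : s(v, w) ∈ J := (SimpleGraph.fromEdgeSet_adj J).mp hadj |>.1
    have hvw : v ≠ w := ((SimpleGraph.fromEdgeSet_adj J).mp hadj).2
    obtain ⟨A, hA, hAonly⟩ := honly _ he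
    -- get B with v ∈ B, w ∉ B, F-member, only crossing edge s(v,w)
    obtain ⟨e₀, he₀, x, y, hxy, hx, hy⟩ := hcov A hA
    have he₀e : e₀ = s(v, w) := hAonly e₀ he₀ x y hxy hx hy
    have hcases : (v ∈ A ∧ w ∉ A) ∨ (w ∈ A ∧ v ∉ A) := by
      rw [he₀e] at hxy
      rcases Sym2.eq_iff.mp hxy.symm with ⟨h1, h2⟩ | ⟨h1, h2⟩
      · exact Or.inl ⟨h1 ▸ hx, h2 ▸ hy⟩
      · exact Or.inr ⟨h1 ▸ hx, h2 ▸ hy⟩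
    obtain ⟨B, hB, hvB, hwB, hBonly⟩ :
        ∃ B ∈ F, v ∈ B ∧ w ∉ B ∧
          ∀ e' ∈ J, ∀ x y : V, e' = s(x, y) → x ∈ B → y ∉ B → e' = s(v, w) := by
      rcases hcases with ⟨h1, h2⟩ | ⟨h1, h2⟩
      · exact ⟨A, hA, h1, h2, hAonly⟩
      · refine ⟨Set.univ \ A, hsym A hA, ⟨trivial, h2⟩, fun h => h.2 h1, ?_⟩
        intro e' he' x y hxy hx hy
        have hyA : y ∈ A := by
          by_contra h
          exact hy ⟨trivial, h⟩
        exact hAonly e' he' y x (hxy.trans (Sym2.eq_swap)) hyA hx.2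
    rcases hdc B hB {v} (Set.singleton_subset_iff.mpr hvB) with h | h
    · exact hsing v h
    · -- B \ {v} ∈ F leads to contradiction
      exfalso
      obtain ⟨e', he', x, y, hxy, hx, hy⟩ := hcov _ h
      by_cases hyB : y ∈ B
      · have hyv : y = v := by
          by_contra hc
          exact hy ⟨hyB, hc⟩
        have hadjvx : G.Adj v x := by
          rw [hG, SimpleGraph.fromEdgeSet_adj]
          refine ⟨?_, fun hc => hx.2 (by simp [hc.symm])⟩
          rw [Sym2.eq_swap]
          exact hyv ▸ hxy ▸ he'
        have := hnbr x hadjvx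
        exact hwB (this ▸ hx.1)
      · have := hBonly e' he' x y hxy hx.1 hyB
        rw [this] at hxy
        rcases Sym2.eq_iff.mp hxy.symm with ⟨h1, h2⟩ | ⟨h1, h2⟩
        · exact hx.2 (Set.mem_singleton_iff.mpr h1)
        · exact hwB (h1 ▸ hx.1)
  · -- each edge's component has two terminals
    intro u w hadj
    have he : s(u, w) ∈ J := ((SimpleGraph.fromEdgeSet_adj J).mp hadj).1
    obtain ⟨A, hA, hAonly⟩ := honly _ he
    have huw : G.Reachable u w := hadj.reachable
    have hinreach : ∀ z : V, z = u ∨ z = w → G.Reachable u z := by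
      rintro z (rfl | rfl)
      · exact SimpleGraph.Reachable.refl _
      · exact huw
    have hkey : ∀ B ∈ F,
        (∀ e' ∈ J, ∀ x y : V, e' = s(x, y) → x ∈ B → y ∉ B → e' = s(u, w)) →
        ∃ t ∈ T, t ∈ B ∧ G.Reachable u t := by
      intro B hB hBonly
      refine reach_term F T J hdc hcore hcov hempty B.ncard B rfl hB u ?_
      intro e' he' x y hxy hx hy
      have := hBonly e' he' x y hxy hx hy
      rw [this] at hxy
      rcases Sym2.eq_iff.mp hxy.symm with ⟨h1, h2⟩ | ⟨h1, h2⟩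
      · exact hinreach x (Or.inl h1)
      · exact hinreach x (Or.inr h1)
    obtain ⟨t₁, ht₁, ht₁A, hr₁⟩ := hkey A hA hAonly
    obtain ⟨t₂, ht₂, ht₂A, hr₂⟩ := hkey (Set.univ \ A) (hsym A hA) (by
      intro e' he' x y hxy hx hy
      have hyA : y ∈ A := by
        by_contra h
        exact hy ⟨trivial, h⟩
      exact hAonly e' he' y x (hxy.trans Sym2.eq_swap) hyA hx.2)
    exact ⟨t₁, ht₁, t₂, ht₂, fun h => ht₂A.2 (h ▸ ht₁A), hr₁, hr₂⟩
end

section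
/- For all real α ≥ 0, θ ∈ [0,1], integers ν₀ ≥ 1 and q with 1 ≤ q ≤ ν₀ and (if θ < 1) q < ν₀: min{αθ/q, 2(1−θ)/(ν₀−q)} ≤ max{α, 2}/ν₀. -/
theorem stmt_12 (α θ : ℝ) (ν₀ q : ℕ)
    (hα : 0 ≤ α) (hθ0 : 0 ≤ θ) (hθ1 : θ ≤ 1)
    (hq1 : 1 ≤ q) (hqν : q ≤ ν₀) (hlt : θ < 1 → q < ν₀) :
    min (α * θ / q) (2 * (1 - θ) / ((ν₀ : ℝ) - q)) ≤ max α 2 / ν₀ := by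
  have hν₀1 : 1 ≤ ν₀ := le_trans hq1 hqν
  have hν0 : (0:ℝ) < ν₀ := by exact_mod_cast hν₀1
  have hq0 : (0:ℝ) < q := by exact_mod_cast hq1
  have hRHS : (0:ℝ) ≤ max α 2 / ν₀ := by positivity
  rcases eq_or_lt_of_le hqν with heq | hlt'
  · have hθ : θ = 1 := by
      by_contra h
      have := hlt (lt_of_le_of_ne hθ1 h)
      omega
    calc min (α * θ / q) (2 * (1 - θ) / ((ν₀ : ℝ) - q))
        ≤ 2 * (1 - θ) / ((ν₀ : ℝ) - q) := min_le_right _ _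
      _ = 0 := by rw [hθ]; simp
      _ ≤ _ := hRHS
  · by_contra h
    push_neg at h
    have h1 : max α 2 / ν₀ < α * θ / q := lt_of_lt_of_le h (min_le_left _ _)
    have h2 : max α 2 / ν₀ < 2 * (1 - θ) / ((ν₀ : ℝ) - q) :=
      lt_of_lt_of_le h (min_le_right _ _)
    have hd : (0:ℝ) < (ν₀ : ℝ) - q := by
      have : (q:ℝ) < ν₀ := by exact_mod_cast hlt'
      linarith
    rw [div_lt_div_iff₀ hν0 hq0] at h1
    rw [div_lt_div_iff₀ hν0 hd] at h2
    have ha : α ≤ max α 2 := le_max_left _ _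
    have hb : (2:ℝ) ≤ max α 2 := le_max_right _ _
    have key : α * θ + 2 * (1 - θ) ≤ max α 2 := by nlinarith
    nlinarith [mul_le_mul_of_nonneg_right key hν0.le]
end

section
/- Let ν₀ ≥ 1 be an integer and ρ > 0, opt > 0 reals. Suppose c₁, …, c_ℓ ≥ 0 and ν₀ > ν₁ > … > ν_ℓ = 0 are such that for each i, c_i/(ν_{i−1} − ν_i) ≤ ρ · opt/ν_{i−1}, and moreover c_ℓ ≤ α · opt for some α > 0. Then Σ_{i=1}^{ℓ} c_i ≤ (α + ρ ln ν₀) · opt. -/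
/-!
Each greedy step pays at most `ρ·opt` per unit of relative decrease `(ν_{i-1} - ν_i)/ν_{i-1}` of the
number of remaining cores, and `1 - y/x ≤ log x - log y` (that is, `ln (1 + t) ≤ t`), so the costs of
all steps but the last telescope to at most `ρ·opt·(ln ν₀ - ln ν_{ℓ-1}) ≤ ρ·opt·ln ν₀`, since
`ν_{ℓ-1} ≥ 1`. The last step costs at most `α·opt` by assumption.
-/

open Finset Real

lemma sub_div_le_log_sub_log {x y : ℝ} (hx : 0 < x) (hy : 0 < y) :
    (x - y) / x ≤ log x - log y := by
  have h := one_sub_inv_le_log_of_pos (div_pos hx hy)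
  rwa [inv_div, log_div hx.ne' hy.ne', one_sub_div hx.ne'] at h

lemma le_mul_log_sub_mul_log_of_div_sub_le {a b c K : ℝ} (hb : 0 < b) (hba : b < a)
    (hK : 0 ≤ K) (h : c / (a - b) ≤ K / a) : c ≤ K * log a - K * log b := by
  have ha : 0 < a := hb.trans hba
  have hc : c ≤ K * ((a - b) / a) := by
    rwa [div_le_div_iff₀ (sub_pos.mpr hba) ha, ← le_div_iff₀ ha, mul_div_assoc] at h
  rw [← mul_sub]
  exact hc.trans (mul_le_mul_of_nonneg_left (sub_div_le_log_sub_log ha hb) hK)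

lemma sum_Icc_le_of_le_sub {M : Type*} [AddCommGroup M] [PartialOrder M] [IsOrderedAddMonoid M]
    {f g : ℕ → M} (m : ℕ) (h : ∀ i ∈ Icc 1 m, f i ≤ g (i - 1) - g i) :
    ∑ i ∈ Icc 1 m, f i ≤ g 0 - g m := by
  induction m with
  | zero => simp
  | succ m ih =>
    rw [sum_Icc_succ_top (by omega)]
    have hlast := h (m + 1) (by simp)
    have hfirst := ih fun i hi => h i (Icc_subset_Icc_right m.le_succ hi)
    rw [Nat.add_sub_cancel] at hlast
    calc ∑ i ∈ Icc 1 m, f i + f (m + 1) ≤ (g 0 - g m) + (g m - g (m + 1)) := add_le_add hfirst hlast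
      _ = g 0 - g (m + 1) := by abel

theorem stmt_13_general (ℓ : ℕ) (hℓ : 1 ≤ ℓ) (ν : ℕ → ℕ) (c : ℕ → ℝ)
    (ρ opt α : ℝ) (hρ : 0 < ρ) (hopt : 0 < opt)
    (hdec : ∀ i < ℓ, ν (i + 1) < ν i)
    (hdens : ∀ i ∈ Finset.Icc 1 ℓ,
      c i / ((ν (i - 1) : ℝ) - ν i) ≤ ρ * opt / (ν (i - 1) : ℝ))
    (hlast : c ℓ ≤ α * opt) :
    ∑ i ∈ Finset.Icc 1 ℓ, c i ≤ (α + ρ * Real.log (ν 0)) * opt := by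
  obtain ⟨m, rfl⟩ := Nat.exists_eq_add_of_le' hℓ
  have hK : 0 ≤ ρ * opt := by positivity
  have hstep : ∀ i ∈ Icc 1 m, c i ≤ ρ * opt * log (ν (i - 1)) - ρ * opt * log (ν i) := by
    intro i hi
    obtain ⟨hi1, him⟩ := mem_Icc.mp hi
    have hb : (0 : ℝ) < ν i := by exact_mod_cast (Nat.zero_le _).trans_lt (hdec i (by omega))
    have hba : (ν i : ℝ) < ν (i - 1) := by
      exact_mod_cast (Nat.sub_add_cancel hi1) ▸ hdec (i - 1) (by omega)
    exact le_mul_log_sub_mul_log_of_div_sub_le hb hba hK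
      (hdens i (Icc_subset_Icc_right (by omega) hi))
  have hbody : ∑ i ∈ Icc 1 m, c i ≤ ρ * opt * log (ν 0) :=
    calc ∑ i ∈ Icc 1 m, c i ≤ ρ * opt * log (ν 0) - ρ * opt * log (ν m) :=
          sum_Icc_le_of_le_sub (g := fun i => ρ * opt * log (ν i)) m hstep
      _ ≤ ρ * opt * log (ν 0) := sub_le_self _ (mul_nonneg hK (log_natCast_nonneg _))
  rw [sum_Icc_succ_top (by omega)]
  linarith [add_mul α (ρ * log (ν 0)) opt, mul_right_comm ρ (log (ν 0)) opt]

theorem stmt_13 (ℓ : ℕ) (hℓ : 1 ≤ ℓ) (ν : ℕ → ℕ) (c : ℕ → ℝ)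
    (ρ opt α : ℝ) (hρ : 0 < ρ) (hopt : 0 < opt) (hα : 0 < α)
    (hν₀ : 1 ≤ ν 0) (hνℓ : ν ℓ = 0)
    (hdec : ∀ i < ℓ, ν (i + 1) < ν i)
    (hc : ∀ i ∈ Finset.Icc 1 ℓ, 0 ≤ c i)
    (hdens : ∀ i ∈ Finset.Icc 1 ℓ,
      c i / ((ν (i - 1) : ℝ) - ν i) ≤ ρ * opt / (ν (i - 1) : ℝ))
    (hlast : c ℓ ≤ α * opt) :
    ∑ i ∈ Finset.Icc 1 ℓ, c i ≤ (α + ρ * Real.log (ν 0)) * opt :=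
  stmt_13_general ℓ hℓ ν c ρ opt α hρ hopt hdec hdens hlast
end

section
/- Let F be a proper (symmetric, disjointness-compliable) family on V whose cores are singletons forming terminal set T, with no subset of V \ T in F. For S ⊆ T, let F_S = {A ∈ F : A divides S}, where A divides S means S ∩ A ≠ ∅ ≠ S \ A. If S ∉ F and V \ S ∉ F, then F = F_S ∪ F_{T \ S}. -/
theorem stmt_17 {V : Type*} (F : Set (Set V)) (T : Set V)
    (hdc : ∀ A ∈ F, ∀ A' ⊆ A, A' ∈ F ∨ A \ A' ∈ F)
    (hsym : ∀ A ∈ F, (Set.univ \ A) ∈ F)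
    (hTcore : ∀ t ∈ T, {t} ∈ F)
    (hcore : ∀ A ∈ F, (∀ B ∈ F, B ⊆ A → B = A) → ∃ t ∈ T, A = {t})
    (hnoT : ∀ A : Set V, A ⊆ Tᶜ → A ∉ F)
    (S : Set V) (hS : S ⊆ T) (hSF : S ∉ F) (hVS : (Set.univ \ S) ∉ F) :
    F = {A ∈ F | S ∩ A ≠ ∅ ∧ S \ A ≠ ∅} ∪
        {A ∈ F | (T \ S) ∩ A ≠ ∅ ∧ (T \ S) \ A ≠ ∅} := by
  ext A
  constructor
  · intro hA
    by_contra hcon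
    push_neg at hcon
    simp only [Set.mem_union, Set.mem_setOf_eq, not_or, not_and_or, not_not] at hcon
    obtain ⟨h1, h2⟩ := hcon
    have h1' : S ∩ A = ∅ ∨ S ⊆ A := by
      rcases h1 with h | h | h
      · exact absurd hA h
      · exact Or.inl (Set.not_nonempty_iff_eq_empty.mp h)
      · exact Or.inr (Set.diff_eq_empty.mp (Set.not_nonempty_iff_eq_empty.mp h))
    have h2' : (T \ S) ∩ A = ∅ ∨ T \ S ⊆ A := by
      rcases h2 with h | h | h
      · exact absurd hA h
      · exact Or.inl (Set.not_nonempty_iff_eq_empty.mp h)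
      · exact Or.inr (Set.diff_eq_empty.mp (Set.not_nonempty_iff_eq_empty.mp h))
    rcases h1' with hSA | hSA <;> rcases h2' with hTA | hTA
    · -- A ∩ T = ∅
      apply hnoT A _ hA
      intro x hx hxT
      by_cases hxS : x ∈ S
      · exact Set.eq_empty_iff_forall_notMem.mp hSA x ⟨hxS, hx⟩
      · exact Set.eq_empty_iff_forall_notMem.mp hTA x ⟨⟨hxT, hxS⟩, hx⟩
    · -- S ⊆ A fails? no: hSA : S∩A=∅, hTA : T\S ⊆ A. Use univ\A.
      have hAc := hsym A hA
      have hSsub : S ⊆ Set.univ \ A := fun x hx =>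
        ⟨trivial, fun hxA => Set.eq_empty_iff_forall_notMem.mp hSA x ⟨hx, hxA⟩⟩
      rcases hdc _ hAc S hSsub with h | h
      · exact hSF h
      · apply hnoT _ _ h
        intro x hx hxT
        obtain ⟨⟨_, hxA⟩, hxS⟩ := hx
        by_cases hxS' : x ∈ S
        · exact hxS hxS'
        · exact hxA (hTA ⟨hxT, hxS'⟩)
    · -- S ⊆ A, (T\S)∩A = ∅
      rcases hdc A hA S hSA with h | h
      · exact hSF h
      · apply hnoT _ _ h
        intro x hx hxT
        obtain ⟨hxA, hxS⟩ := hx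
        by_cases hxS' : x ∈ S
        · exact hxS hxS'
        · exact Set.eq_empty_iff_forall_notMem.mp hTA x ⟨⟨hxT, hxS'⟩, hxA⟩
    · -- T ⊆ A, so univ\A ⊆ Tᶜ
      apply hnoT (Set.univ \ A) _ (hsym A hA)
      intro x hx hxT
      apply hx.2
      by_cases hxS : x ∈ S
      · exact hSA hxS
      · exact hTA ⟨hxT, hxS⟩
  · rintro (⟨hA, _⟩ | ⟨hA, _⟩) <;> exact hA
end

section
/- Let F be a proper family on V with singleton cores forming terminal set T (no subset of V \ T in F), let J be an F-cover, H a connected component of (V, J), and S = (vertex set of H) ∩ T. Then S ∉ F, and J minus the edges of H covers F_{T\S} \ F_S, where F_S = {A ∈ F : S ∩ A ≠ ∅ ≠ S \ A}. -/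
theorem stmt_18 {V : Type*} (F : Set (Set V)) (T : Set V) (J : Set (Sym2 V))
    (hdc : ∀ A ∈ F, ∀ A' ⊆ A, A' ∈ F ∨ A \ A' ∈ F)
    (hsym : ∀ A ∈ F, (Set.univ \ A) ∈ F)
    (hTcore : ∀ t ∈ T, {t} ∈ F)
    (hcore : ∀ A ∈ F, (∀ B ∈ F, B ⊆ A → B = A) → ∃ t ∈ T, A = {t})
    (hnoT : ∀ A : Set V, A ⊆ Tᶜ → A ∉ F)
    (hcov : EdgeCovers J F)
    (v₀ : V) :
    let comp : Set V := {u | (SimpleGraph.fromEdgeSet J).Reachable v₀ u}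
    let S : Set V := comp ∩ T
    S ∉ F ∧
    EdgeCovers {e ∈ J | ¬ ∃ u v, e = s(u, v) ∧ u ∈ comp ∧ v ∈ comp}
      ({A ∈ F | (T \ S) ∩ A ≠ ∅ ∧ (T \ S) \ A ≠ ∅} \
       {A ∈ F | S ∩ A ≠ ∅ ∧ S \ A ≠ ∅}) := by
  intro comp S
  -- edges of J cannot leave comp
  have hedge : ∀ u v : V, s(u, v) ∈ J → v ∈ comp → u ∈ comp := by
    intro u v huv hv
    by_cases h : u = v
    · subst h; exact hv
    · refine hv.trans (SimpleGraph.Adj.reachable ?_)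
      rw [SimpleGraph.fromEdgeSet_adj]
      exact ⟨by rwa [Sym2.eq_swap], fun hh => h hh.symm⟩
  have hS : S ∉ F := by
    intro hSF
    have hB := hsym S hSF
    rcases hdc _ hB (comp \ S) (fun x hx => ⟨trivial, hx.2⟩) with h1 | h2
    · exact hnoT _ (fun x hx hxT => hx.2 ⟨hx.1, hxT⟩) h1
    · obtain ⟨e, heJ, u, v, he, hu, hv⟩ := hcov _ h2
      have hunc : u ∉ comp := fun hc => hu.2 ⟨hc, hu.1.2⟩
      have hvc : v ∈ comp := by
        by_contra hvc
        exact hv ⟨⟨trivial, fun hvS => hvc hvS.1⟩, fun hh => hvc hh.1⟩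
      exact hunc (hedge u v (he ▸ heJ) hvc)
  refine ⟨hS, ?_⟩
  intro A hA
  obtain ⟨⟨hAF, -, -⟩, hnot⟩ := hA
  have hnot' : S ∩ A = ∅ ∨ S ⊆ A := by
    by_contra h
    push_neg at h
    exact hnot ⟨hAF, Set.nonempty_iff_ne_empty.mp h.1, fun hd => h.2 (Set.diff_eq_empty.mp hd)⟩
  rcases hnot' with hSA | hSA
  · -- S ∩ A = ∅ : cut A by comp
    have hsub : A \ comp ⊆ A := Set.diff_subset
    rcases hdc A hAF _ hsub with h1 | h2
    · obtain ⟨e, heJ, u, v, he, hu, hv⟩ := hcov _ h1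
      have hunc : u ∉ comp := hu.2
      have hvnc : v ∉ comp := fun hc => hunc (hedge u v (he ▸ heJ) hc)
      refine ⟨e, ⟨heJ, ?_⟩, u, v, he, hu.1, fun hvA => hv ⟨hvA, hvnc⟩⟩
      rintro ⟨u', v', he', hu', hv'⟩
      rw [he, Sym2.eq_iff] at he'
      rcases he' with ⟨rfl, rfl⟩ | ⟨rfl, rfl⟩
      · exact hunc hu'
      · exact hunc hv'
    · -- A \ (A \ comp) ⊆ Tᶜ
      refine absurd h2 (hnoT _ fun x hx hxT => ?_)
      have hxc : x ∈ comp := by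
        by_contra hc; exact hx.2 ⟨hx.1, hc⟩
      exact (Set.eq_empty_iff_forall_notMem.mp hSA x) ⟨⟨hxc, hxT⟩, hx.1⟩
  · -- S ⊆ A : work with the complement
    have hB := hsym A hAF
    rcases hdc _ hB ((Set.univ \ A) \ comp) Set.diff_subset with h1 | h2
    · obtain ⟨e, heJ, u, v, he, hu, hv⟩ := hcov _ h1
      have hunc : u ∉ comp := hu.2
      have hvnc : v ∉ comp := fun hc => hunc (hedge u v (he ▸ heJ) hc)
      have hvA : v ∈ A := by
        by_contra hvA
        exact hv ⟨⟨trivial, hvA⟩, hvnc⟩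
      refine ⟨e, ⟨heJ, ?_⟩, v, u, by rw [he, Sym2.eq_swap], hvA, hu.1.2⟩
      rintro ⟨u', v', he', hu', hv'⟩
      rw [he, Sym2.eq_iff] at he'
      rcases he' with ⟨rfl, rfl⟩ | ⟨rfl, rfl⟩
      · exact hunc hu'
      · exact hunc hv'
    · refine absurd h2 (hnoT _ fun x hx hxT => ?_)
      have hxc : x ∈ comp := by
        by_contra hc; exact hx.2 ⟨hx.1, hc⟩
      exact hx.1.2 (hSA ⟨hxc, hxT⟩)
end
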